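/- Let (P_t)_{t ∈ ℕ} be a real sequence satisfying, for every t ≥ 1, P_t = (1/n_t)·( n_{t−1} − m·m̂·α·n_{t−1}/e_{t−1} − m·(1 − α) )·P_{t−1} + 1/n_t. Then P_t converges as t → ∞, and lim_{t→∞} P_t = (m + m̂)/(m + m̂ + m² + m·m̂ − m²·α). -/

import Mathlib

open Filter

lemma aux_sum_Ioc_le_tail (d : ℕ → ℝ) (hd0 : ∀ t, 0 ≤ d t) (hds : Summable d)
    (S t : ℕ) : ∑ s ∈ Finset.Ioc S t, d s ≤ ∑' k, d (k + (S+1)) := by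
  have h := hds.sum_add_tsum_nat_add (S+1)
  rcases le_or_gt t S with h' | h'
  · rw [Finset.Ioc_eq_empty (by omega)]
    simp only [Finset.sum_empty]
    exact tsum_nonneg fun k => hd0 _
  · have hunion : Finset.range (S+1) ∪ Finset.Ioc S t = Finset.range (t+1) := by
      ext x; simp [Finset.mem_range, Finset.mem_Ioc]; omega
    have hdisj : Disjoint (Finset.range (S+1)) (Finset.Ioc S t) := by
      rw [Finset.disjoint_left]; intro x hx hx'
      simp [Finset.mem_range] at hx; simp [Finset.mem_Ioc] at hx'; omega
    have heq : ∑ i ∈ Finset.range (S+1), d i + ∑ s ∈ Finset.Ioc S t, d s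
        = ∑ i ∈ Finset.range (t+1), d i := by
      rw [← Finset.sum_union hdisj, hunion]
    have hle := hds.sum_le_tsum (Finset.range (t+1)) (fun i _ => hd0 i)
    linarith


lemma aux_tendsto (n0 : ℕ) (hn0 : 1 ≤ n0) (E d : ℕ → ℝ) (T : ℕ)
    (hE0 : ∀ t, 0 ≤ E t)
    (hd0 : ∀ t, 0 ≤ d t) (hds : Summable d)
    (hstep : ∀ t, T ≤ t → E (t+1) ≤ (1 - 1/((n0:ℝ)+t+1)) * E t + d (t+1)) :
    Tendsto E atTop (nhds 0) := by
  have hn0R : (1:ℝ) ≤ (n0:ℝ) := by exact_mod_cast hn0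
  have hNpos : ∀ t : ℕ, (0:ℝ) < (n0:ℝ) + t := by
    intro t
    have : (0:ℝ) ≤ (t:ℝ) := Nat.cast_nonneg t
    linarith
  have key : ∀ S, T ≤ S → ∀ t, S ≤ t →
      E t ≤ (((n0:ℝ)+S)/((n0:ℝ)+t)) * E S + ∑ s ∈ Finset.Ioc S t, d s := by
    intro S hS t ht
    induction t, ht using Nat.le_induction with
    | base =>
      simp only [Finset.Ioc_self, Finset.sum_empty, add_zero]
      rw [div_self (ne_of_gt (hNpos S))]
      simp
    | succ t ht ih =>
      have hX : (0:ℝ) < (n0:ℝ) + t + 1 := by have := hNpos t; linarith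
      have h1 : E (t+1) ≤ (1 - 1/((n0:ℝ)+t+1)) * E t + d (t+1) := hstep t (le_trans hS ht)
      have hfac : (0:ℝ) ≤ 1 - 1/((n0:ℝ)+t+1) := by
        rw [sub_nonneg, div_le_one hX]
        have := hNpos t; linarith
      have h2 : (1 - 1/((n0:ℝ)+t+1)) * E t ≤ (1 - 1/((n0:ℝ)+t+1)) *
          ((((n0:ℝ)+S)/((n0:ℝ)+t)) * E S + ∑ s ∈ Finset.Ioc S t, d s) :=
        mul_le_mul_of_nonneg_left ih hfac
      have hprod : (1 - 1/((n0:ℝ)+t+1)) * (((n0:ℝ)+S)/((n0:ℝ)+t))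
          = ((n0:ℝ)+S)/((n0:ℝ)+t+1) := by
        have h0 : ((n0:ℝ)+t) ≠ 0 := ne_of_gt (hNpos t)
        have h0' : ((n0:ℝ)+t+1) ≠ 0 := ne_of_gt hX
        field_simp
        ring
      have hsumnn : (0:ℝ) ≤ ∑ s ∈ Finset.Ioc S t, d s :=
        Finset.sum_nonneg fun s _ => hd0 s
      have h3 : (1 - 1/((n0:ℝ)+t+1)) * ∑ s ∈ Finset.Ioc S t, d s
          ≤ ∑ s ∈ Finset.Ioc S t, d s := by
        have h4 : (0:ℝ) < 1/((n0:ℝ)+t+1) := by positivity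
        nlinarith
      have hIoc : ∑ s ∈ Finset.Ioc S (t+1), d s = ∑ s ∈ Finset.Ioc S t, d s + d (t+1) := by
        rw [← Finset.sum_Ioc_succ_top (by omega)]
      have hgoal : E (t+1) ≤ ((n0:ℝ)+S)/((n0:ℝ)+t+1) * E S
          + (∑ s ∈ Finset.Ioc S t, d s + d (t+1)) :=
        calc E (t+1) ≤ (1 - 1/((n0:ℝ)+t+1)) * E t + d (t+1) := h1
          _ ≤ (1 - 1/((n0:ℝ)+t+1)) *
              ((((n0:ℝ)+S)/((n0:ℝ)+t)) * E S + ∑ s ∈ Finset.Ioc S t, d s) + d (t+1) := by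
              linarith
          _ = ((1 - 1/((n0:ℝ)+t+1)) * (((n0:ℝ)+S)/((n0:ℝ)+t))) * E S
              + (1 - 1/((n0:ℝ)+t+1)) * ∑ s ∈ Finset.Ioc S t, d s + d (t+1) := by ring
          _ = ((n0:ℝ)+S)/((n0:ℝ)+t+1) * E S
              + (1 - 1/((n0:ℝ)+t+1)) * ∑ s ∈ Finset.Ioc S t, d s + d (t+1) := by rw [hprod]
          _ ≤ ((n0:ℝ)+S)/((n0:ℝ)+t+1) * E S
              + (∑ s ∈ Finset.Ioc S t, d s + d (t+1)) := by linarith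
      rw [hIoc]
      have hcast : ((n0:ℝ) + ((t:ℕ)+1 : ℕ)) = (n0:ℝ) + t + 1 := by push_cast; ring
      rw [hcast]
      exact hgoal
  -- epsilon argument
  rw [Metric.tendsto_atTop]
  intro ε hε
  have htail : Tendsto (fun S => ∑' k, d (k + S)) atTop (nhds 0) := tendsto_sum_nat_add d
  obtain ⟨S0, hS0⟩ := (Metric.tendsto_atTop.mp htail) (ε/2) (by linarith)
  set S := max S0 T with hSdef
  have hStail : ∑' k, d (k + (S+1)) < ε/2 := by
    have := hS0 (S+1) (by omega)
    rw [Real.dist_eq] at this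
    have hnn : (0:ℝ) ≤ ∑' k, d (k + (S+1)) := tsum_nonneg fun k => hd0 _
    rw [abs_of_nonneg (by linarith)] at this
    linarith
  -- choose t0 with ((n0+S)/(n0+t)) * E S < ε/2 for t ≥ t0
  have hlim : Tendsto (fun t : ℕ => (((n0:ℝ)+S) * E S) / ((n0:ℝ)+t)) atTop (nhds 0) := by
    apply Tendsto.div_atTop tendsto_const_nhds
    apply Filter.tendsto_atTop_add_const_left
    exact tendsto_natCast_atTop_atTop
  obtain ⟨t0, ht0⟩ := (Metric.tendsto_atTop.mp hlim) (ε/2) (by linarith)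
  refine ⟨max t0 S, fun t ht => ?_⟩
  have htS : S ≤ t := le_trans (le_max_right _ _) ht
  have hkey := key S (le_max_right _ _) t htS
  have htails := aux_sum_Ioc_le_tail d hd0 hds S t
  have hfrac := ht0 t (le_trans (le_max_left _ _) ht)
  rw [Real.dist_eq] at hfrac ⊢
  have hnnf : (0:ℝ) ≤ (((n0:ℝ)+S) * E S) / ((n0:ℝ)+t) :=
    div_nonneg (mul_nonneg (le_of_lt (hNpos S)) (hE0 S)) (le_of_lt (hNpos t))
  rw [sub_zero, abs_of_nonneg hnnf] at hfrac
  rw [sub_zero, abs_of_nonneg (hE0 t)]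
  have heq2 : (((n0:ℝ)+S)/((n0:ℝ)+t)) * E S = (((n0:ℝ)+S) * E S) / ((n0:ℝ)+t) := by ring
  rw [heq2] at hkey
  linarith

set_option maxHeartbeats 2000000 in
theorem base_indegree_fraction_limit
    (m mh : ℕ) (hm : 1 ≤ m)
    (α : ℝ) (hα : α ∈ Set.Icc (0 : ℝ) 1)
    (n0 e0 : ℕ) (hn0 : 1 ≤ n0) (he0 : 1 ≤ e0)
    (P : ℕ → ℝ)
    (hrec : ∀ t : ℕ, 1 ≤ t →
      P t = (1 / ((n0 + t : ℕ) : ℝ)) *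
          (((n0 + (t - 1) : ℕ) : ℝ)
            - (m : ℝ) * (mh : ℝ) * α * ((n0 + (t - 1) : ℕ) : ℝ)
                / ((e0 + (m + mh) * (t - 1) : ℕ) : ℝ)
            - (m : ℝ) * (1 - α)) * P (t - 1)
        + 1 / ((n0 + t : ℕ) : ℝ)) :
    Tendsto P atTop
      (nhds (((m : ℝ) + (mh : ℝ)) /
        ((m : ℝ) + (mh : ℝ) + (m : ℝ) ^ 2 + (m : ℝ) * (mh : ℝ) - (m : ℝ) ^ 2 * α))) := by
  obtain ⟨hα0, hα1⟩ := hα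
  have hM : (1:ℝ) ≤ (m:ℝ) := by exact_mod_cast hm
  have hH : (0:ℝ) ≤ (mh:ℝ) := Nat.cast_nonneg mh
  have hMHpos : (0:ℝ) < (m:ℝ) + (mh:ℝ) := by linarith
  have hMHne : ((m:ℝ) + (mh:ℝ)) ≠ 0 := ne_of_gt hMHpos
  have hdenpos : (0:ℝ) < (m:ℝ) + (mh:ℝ) + (m:ℝ)^2 + (m:ℝ)*(mh:ℝ) - (m:ℝ)^2*α := by
    nlinarith
  have hdenne := ne_of_gt hdenpos
  set L : ℝ := ((m:ℝ) + (mh:ℝ)) /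
      ((m:ℝ) + (mh:ℝ) + (m:ℝ)^2 + (m:ℝ)*(mh:ℝ) - (m:ℝ)^2*α) with hL_def
  set D : ℝ := |L| * ((m:ℝ)*(mh:ℝ)*α) * |(e0:ℝ) - ((m:ℝ)+(mh:ℝ))*(n0:ℝ)| with hD_def
  have hAnn : (0:ℝ) ≤ (m:ℝ)*(mh:ℝ)*α := by positivity
  have hD : 0 ≤ D := mul_nonneg (mul_nonneg (abs_nonneg _) hAnn) (abs_nonneg _)
  set d : ℕ → ℝ := fun s => D * (1/(s:ℝ)^2) with hd_def
  have hd0 : ∀ s, 0 ≤ d s := fun s => mul_nonneg hD (by positivity)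
  have hds : Summable d :=
    (Real.summable_one_div_nat_pow.mpr one_lt_two).mul_left D
  have hn0R : (1:ℝ) ≤ (n0:ℝ) := by exact_mod_cast hn0
  have he0R : (1:ℝ) ≤ (e0:ℝ) := by exact_mod_cast he0
  -- the main step bound
  have hstep : ∀ t, 2*m*mh + 2*m ≤ t →
      |P (t+1) - L| ≤ (1 - 1/((n0:ℝ)+t+1)) * |P t - L| + d (t+1) := by
    intro t ht
    have hr := hrec (t+1) (by omega)
    simp only [Nat.add_sub_cancel] at hr
    have hnt : ((n0 + t : ℕ):ℝ) = (n0:ℝ) + t := by push_cast; ring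
    have hN : ((n0 + (t+1) : ℕ):ℝ) = (n0:ℝ) + t + 1 := by push_cast; ring
    have het : ((e0 + (m+mh)*t : ℕ):ℝ) = (e0:ℝ) + ((m:ℝ)+(mh:ℝ))*t := by push_cast; ring
    rw [hnt, hN, het] at hr
    have htR : 2*(m:ℝ)*(mh:ℝ) + 2*(m:ℝ) ≤ (t:ℝ) := by
      have : ((2*m*mh + 2*m : ℕ):ℝ) ≤ (t:ℝ) := Nat.cast_le.mpr ht
      push_cast at this; linarith
    have htpos : (0:ℝ) ≤ (t:ℝ) := Nat.cast_nonneg t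
    have hntpos : (0:ℝ) < (n0:ℝ) + t := by linarith
    have hnt1 : (t:ℝ) + 1 ≤ (n0:ℝ) + t := by linarith
    have hNpos : (0:ℝ) < (n0:ℝ) + t + 1 := by linarith
    have hNne := ne_of_gt hNpos
    have hetge : (t:ℝ) + 1 ≤ (e0:ℝ) + ((m:ℝ)+(mh:ℝ))*t := by nlinarith
    have hetpos : (0:ℝ) < (e0:ℝ) + ((m:ℝ)+(mh:ℝ))*t := by linarith
    have hetne := ne_of_gt hetpos
    -- the exact error identity
    have hiden : P (t+1) - L
        = ((1/((n0:ℝ)+t+1)) * (((n0:ℝ)+t)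
            - (m:ℝ)*(mh:ℝ)*α*((n0:ℝ)+t)/((e0:ℝ) + ((m:ℝ)+(mh:ℝ))*t)
            - (m:ℝ)*(1-α))) * (P t - L)
          + L*((m:ℝ)*(mh:ℝ)*α)*((e0:ℝ) - ((m:ℝ)+(mh:ℝ))*(n0:ℝ))
              / (((m:ℝ)+(mh:ℝ))*((e0:ℝ) + ((m:ℝ)+(mh:ℝ))*t)*((n0:ℝ)+t+1)) := by
      have hkey : ((1/((n0:ℝ)+t+1)) * (((n0:ℝ)+t)
            - (m:ℝ)*(mh:ℝ)*α*((n0:ℝ)+t)/((e0:ℝ) + ((m:ℝ)+(mh:ℝ))*t)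
            - (m:ℝ)*(1-α))) * L + 1/((n0:ℝ)+t+1) - L
          = L*((m:ℝ)*(mh:ℝ)*α)*((e0:ℝ) - ((m:ℝ)+(mh:ℝ))*(n0:ℝ))
              / (((m:ℝ)+(mh:ℝ))*((e0:ℝ) + ((m:ℝ)+(mh:ℝ))*t)*((n0:ℝ)+t+1)) := by
        rw [hL_def]
        field_simp
        ring
      rw [hr]
      linear_combination hkey
    -- bounds on the coefficient
    have hAle2 : 2*((m:ℝ)*(mh:ℝ)*α) ≤ (e0:ℝ) + ((m:ℝ)+(mh:ℝ))*t := by nlinarith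
    have hBle2 : 2*((m:ℝ)*(1-α)) ≤ (n0:ℝ) + t := by nlinarith
    have hfrac_le : (m:ℝ)*(mh:ℝ)*α*((n0:ℝ)+t)/((e0:ℝ) + ((m:ℝ)+(mh:ℝ))*t)
        ≤ ((n0:ℝ)+t)/2 := by
      rw [div_le_div_iff₀ hetpos two_pos]
      nlinarith
    have hnum_nn : (0:ℝ) ≤ ((n0:ℝ)+t)
        - (m:ℝ)*(mh:ℝ)*α*((n0:ℝ)+t)/((e0:ℝ) + ((m:ℝ)+(mh:ℝ))*t) - (m:ℝ)*(1-α) := by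
      nlinarith
    have hfrac_nn : (0:ℝ) ≤ (m:ℝ)*(mh:ℝ)*α*((n0:ℝ)+t)/((e0:ℝ) + ((m:ℝ)+(mh:ℝ))*t) := by
      positivity
    have ha0 : (0:ℝ) ≤ (1/((n0:ℝ)+t+1)) * (((n0:ℝ)+t)
        - (m:ℝ)*(mh:ℝ)*α*((n0:ℝ)+t)/((e0:ℝ) + ((m:ℝ)+(mh:ℝ))*t) - (m:ℝ)*(1-α)) := by
      have : (0:ℝ) ≤ 1/((n0:ℝ)+t+1) := by positivity
      exact mul_nonneg this hnum_nn
    have ha1 : (1/((n0:ℝ)+t+1)) * (((n0:ℝ)+t)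
        - (m:ℝ)*(mh:ℝ)*α*((n0:ℝ)+t)/((e0:ℝ) + ((m:ℝ)+(mh:ℝ))*t) - (m:ℝ)*(1-α))
        ≤ 1 - 1/((n0:ℝ)+t+1) := by
      have h1 : 1 - 1/((n0:ℝ)+t+1) = ((n0:ℝ)+t)/((n0:ℝ)+t+1) := by
        field_simp
        ring
      have h2 : (1/((n0:ℝ)+t+1)) * (((n0:ℝ)+t)
          - (m:ℝ)*(mh:ℝ)*α*((n0:ℝ)+t)/((e0:ℝ) + ((m:ℝ)+(mh:ℝ))*t) - (m:ℝ)*(1-α))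
          = (((n0:ℝ)+t)
          - (m:ℝ)*(mh:ℝ)*α*((n0:ℝ)+t)/((e0:ℝ) + ((m:ℝ)+(mh:ℝ))*t) - (m:ℝ)*(1-α))
            / ((n0:ℝ)+t+1) := by ring
      rw [h1, h2]
      apply (div_le_div_iff_of_pos_right hNpos).mpr
      nlinarith
    -- bound on the perturbation
    have hδ : |L*((m:ℝ)*(mh:ℝ)*α)*((e0:ℝ) - ((m:ℝ)+(mh:ℝ))*(n0:ℝ))
        / (((m:ℝ)+(mh:ℝ))*((e0:ℝ) + ((m:ℝ)+(mh:ℝ))*t)*((n0:ℝ)+t+1))| ≤ d (t+1) := by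
      rw [abs_div, abs_mul, abs_mul]
      rw [abs_of_nonneg hAnn]
      rw [abs_of_pos (mul_pos (mul_pos hMHpos hetpos) hNpos)]
      have hcast : ((t+1:ℕ):ℝ) = (t:ℝ)+1 := by push_cast; ring
      have hdval : d (t+1) = D / ((t:ℝ)+1)^2 := by
        rw [hd_def]; simp only [hcast]; ring
      rw [hdval, hD_def]
      have hmono : ((t:ℝ)+1)^2 ≤ ((m:ℝ)+(mh:ℝ))*((e0:ℝ) + ((m:ℝ)+(mh:ℝ))*t)*((n0:ℝ)+t+1) := by
        have h1 : ((t:ℝ)+1)*((t:ℝ)+1) ≤ ((e0:ℝ) + ((m:ℝ)+(mh:ℝ))*t)*((n0:ℝ)+t+1) :=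
          mul_le_mul hetge (by linarith) (by linarith) (le_of_lt hetpos)
        have h2 : ((e0:ℝ) + ((m:ℝ)+(mh:ℝ))*t)*((n0:ℝ)+t+1)
            ≤ ((m:ℝ)+(mh:ℝ))*(((e0:ℝ) + ((m:ℝ)+(mh:ℝ))*t)*((n0:ℝ)+t+1)) := by
          apply le_mul_of_one_le_left (by positivity) (by linarith)
        calc ((t:ℝ)+1)^2 = ((t:ℝ)+1)*((t:ℝ)+1) := by ring
          _ ≤ ((e0:ℝ) + ((m:ℝ)+(mh:ℝ))*t)*((n0:ℝ)+t+1) := h1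
          _ ≤ ((m:ℝ)+(mh:ℝ))*(((e0:ℝ) + ((m:ℝ)+(mh:ℝ))*t)*((n0:ℝ)+t+1)) := h2
          _ = ((m:ℝ)+(mh:ℝ))*((e0:ℝ) + ((m:ℝ)+(mh:ℝ))*t)*((n0:ℝ)+t+1) := by ring
      exact div_le_div_of_nonneg_left
        (mul_nonneg (mul_nonneg (abs_nonneg _) hAnn) (abs_nonneg _)) (by positivity) hmono
    calc |P (t+1) - L| = |((1/((n0:ℝ)+t+1)) * (((n0:ℝ)+t)
            - (m:ℝ)*(mh:ℝ)*α*((n0:ℝ)+t)/((e0:ℝ) + ((m:ℝ)+(mh:ℝ))*t)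
            - (m:ℝ)*(1-α))) * (P t - L)
          + L*((m:ℝ)*(mh:ℝ)*α)*((e0:ℝ) - ((m:ℝ)+(mh:ℝ))*(n0:ℝ))
              / (((m:ℝ)+(mh:ℝ))*((e0:ℝ) + ((m:ℝ)+(mh:ℝ))*t)*((n0:ℝ)+t+1))| := by
            rw [← hiden]
      _ ≤ |((1/((n0:ℝ)+t+1)) * (((n0:ℝ)+t)
            - (m:ℝ)*(mh:ℝ)*α*((n0:ℝ)+t)/((e0:ℝ) + ((m:ℝ)+(mh:ℝ))*t)
            - (m:ℝ)*(1-α))) * (P t - L)|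
          + |L*((m:ℝ)*(mh:ℝ)*α)*((e0:ℝ) - ((m:ℝ)+(mh:ℝ))*(n0:ℝ))
              / (((m:ℝ)+(mh:ℝ))*((e0:ℝ) + ((m:ℝ)+(mh:ℝ))*t)*((n0:ℝ)+t+1))| := abs_add_le _ _
      _ ≤ (1 - 1/((n0:ℝ)+t+1)) * |P t - L| + d (t+1) := by
          rw [abs_mul]
          rw [abs_of_nonneg ha0]
          have := mul_le_mul_of_nonneg_right ha1 (abs_nonneg (P t - L))
          linarith
  -- apply the generic convergence lemma
  have hEtend : Tendsto (fun t => |P t - L|) atTop (nhds 0) :=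
    aux_tendsto n0 hn0 (fun t => |P t - L|) d (2*m*mh + 2*m)
      (fun t => abs_nonneg _) hd0 hds hstep
  have : Tendsto P atTop (nhds L) := by
    rw [tendsto_iff_dist_tendsto_zero]
    simpa [Real.dist_eq] using hEtend
  exact this
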